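/- For every real number x > -1/2, one has 1/(24(x+1)^2) < H_x - γ - log(x + 1/2) < 1/(24(x+1/2)^2), where H_x = Ψ(x+1) + γ is the analytic continuation of the harmonic numbers via the digamma function Ψ and γ is the Euler–Mascheroni constant. -/

import Mathlib

open Real Filter MeasureTheory

/-- The digamma function: the logarithmic derivative of the Gamma function. -/
noncomputable def digamma (x : ℝ) : ℝ := deriv (fun y => Real.log (Real.Gamma y)) x

/-- The harmonic number function extended to real arguments: `H_x = Ψ(x+1) + γ`. -/
noncomputable def Hreal (x : ℝ) : ℝ := digamma (x + 1) + Real.eulerMascheroniConstant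

section auxiliary

open Set

private lemma aux_pos_of_anti {F F' : ℝ → ℝ}
    (hd : ∀ t : ℝ, 1/2 < t → HasDerivAt F (F' t) t)
    (hneg : ∀ t : ℝ, 1/2 < t → F' t < 0)
    (hlim : Tendsto F atTop (nhds 0)) :
    ∀ t : ℝ, 1/2 < t → 0 < F t := by
  intro t ht
  have hanti : StrictAntiOn F (Ici t) := by
    apply strictAntiOn_of_deriv_neg (convex_Ici t)
    · intro s hs
      exact (hd s (ht.trans_le hs)).differentiableAt.continuousAt.continuousWithinAt
    · intro s hs
      rw [interior_Ici] at hs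
      rw [(hd s (ht.trans (mem_Ioi.mp hs))).deriv]
      exact hneg s (ht.trans hs)
  have h1 : 0 ≤ F (t+1) := by
    refine le_of_tendsto hlim ?_
    filter_upwards [eventually_ge_atTop (t+1)] with s hs
    exact hanti.antitoneOn (by simp : t+1 ∈ Ici t)
      (by simp only [mem_Ici]; linarith : s ∈ Ici t) hs
  have h2 := hanti (le_refl t) (by simp only [mem_Ici]; linarith : t+1 ∈ Ici t)
    (by linarith : t < t+1)
  linarith

private lemma aux_tendsto_log_diff (a b : ℝ) :
    Tendsto (fun t : ℝ => log (t + a) - log (t + b)) atTop (nhds 0) := by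
  have hb : Tendsto (fun t : ℝ => t + b) atTop atTop :=
    tendsto_atTop_add_const_right _ b tendsto_id
  have h2 : Tendsto (fun t : ℝ => (a - b) / (t + b)) atTop (nhds 0) :=
    Tendsto.div_atTop tendsto_const_nhds hb
  have h : Tendsto (fun t : ℝ => 1 + (a - b) / (t + b)) atTop (nhds 1) := by
    simpa using tendsto_const_nhds.add h2
  have h3 := ((Real.continuousAt_log one_ne_zero).tendsto).comp h
  rw [Real.log_one] at h3
  apply h3.congr'
  filter_upwards [eventually_gt_atTop (-a), eventually_gt_atTop (-b)] with t hta htb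
  have ha' : (0:ℝ) < t + a := by linarith
  have hb' : (0:ℝ) < t + b := by linarith
  have : 1 + (a - b) / (t + b) = (t + a) / (t + b) := by field_simp; ring
  simp only [Function.comp_apply, this]
  rw [Real.log_div ha'.ne' hb'.ne']

private lemma aux_tendsto_inv_sq {g : ℝ → ℝ} (hg : Tendsto g atTop atTop) :
    Tendsto (fun t : ℝ => ((g t) ^ 2)⁻¹) atTop (nhds 0) :=
  ((tendsto_pow_atTop two_ne_zero).comp hg).inv_tendsto_atTop

private lemma aux_tendsto_sub_half : Tendsto (fun t : ℝ => t - 1/2) atTop atTop :=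
  (tendsto_atTop_add_const_right atTop (-(1/2)) tendsto_id).congr (fun t => by simp; ring)

private lemma aux_tendsto_logpart :
    Tendsto (fun t : ℝ => log (t + 1/2) - log (t - 1/2)) atTop (nhds 0) :=
  (aux_tendsto_log_diff (1/2) (-(1/2))).congr (fun t => by rw [← sub_eq_add_neg])

private lemma aux_ineqA (t : ℝ) (ht : 1/2 < t) :
    log (t + 1/2) - log (t - 1/2) - t⁻¹ < ((t - 1/2)^2)⁻¹/24 - ((t + 1/2)^2)⁻¹/24 := by
  have key : ∀ s : ℝ, 1/2 < s →
      0 < ((s - 1/2)^2)⁻¹/24 - ((s + 1/2)^2)⁻¹/24 - (log (s + 1/2) - log (s - 1/2) - s⁻¹) := by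
    apply aux_pos_of_anti (F' := fun s => -(28*s^2-3)/(192*s^2*(s^2-1/4)^3))
    · intro s hs
      have h1 : (0:ℝ) < s - 1/2 := by linarith
      have h2 : (0:ℝ) < s + 1/2 := by linarith
      have hs0 : (0:ℝ) < s := by linarith
      have d1 : HasDerivAt (fun u : ℝ => ((u - 1/2)^2)⁻¹)
          (-(2*(s - 1/2)) / ((s - 1/2)^2)^2) s := by
        have : HasDerivAt (fun u : ℝ => (u - 1/2)^2) (2*(s - 1/2)) s := by
          refine (((hasDerivAt_id s).sub_const (1/2)).fun_pow 2).congr_deriv ?_; simp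
        simpa using this.fun_inv (by positivity)
      have d2 : HasDerivAt (fun u : ℝ => ((u + 1/2)^2)⁻¹)
          (-(2*(s + 1/2)) / ((s + 1/2)^2)^2) s := by
        have : HasDerivAt (fun u : ℝ => (u + 1/2)^2) (2*(s + 1/2)) s := by
          refine (((hasDerivAt_id s).add_const (1/2)).fun_pow 2).congr_deriv ?_; simp
        simpa using this.fun_inv (by positivity)
      have d3 : HasDerivAt (fun u : ℝ => log (u + 1/2)) (1/(s + 1/2)) s := by
        simpa using ((hasDerivAt_id s).add_const (1/2)).log h2.ne'
      have d4 : HasDerivAt (fun u : ℝ => log (u - 1/2)) (1/(s - 1/2)) s := by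
        simpa using ((hasDerivAt_id s).sub_const (1/2)).log h1.ne'
      have d5 : HasDerivAt (fun u : ℝ => u⁻¹) (-(s^2)⁻¹) s := hasDerivAt_inv hs0.ne'
      have comb := ((d1.div_const 24).sub (d2.div_const 24)).sub ((d3.sub d4).sub d5)
      refine comb.congr_deriv ?_; symm; beta_reduce
      obtain ⟨a, ha⟩ : ∃ a : ℝ, a = s - 1/2 := ⟨_, rfl⟩
      obtain ⟨b, hb⟩ : ∃ b : ℝ, b = s + 1/2 := ⟨_, rfl⟩
      have e1 : s^2 - 1/4 = a * b := by rw [ha, hb]; ring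
      rw [e1, ← ha, ← hb]
      have n1 : a ≠ 0 := by rw [ha]; exact h1.ne'
      have n2 : b ≠ 0 := by rw [hb]; exact h2.ne'
      have n3 : s ≠ 0 := hs0.ne'
      field_simp
      rw [ha, hb]
      ring
    · intro s hs
      have h1 : (0:ℝ) < s^2 - 1/4 := by nlinarith
      have h2 : (0:ℝ) < 192*s^2*(s^2-1/4)^3 := by
        have h3 := pow_pos h1 3
        nlinarith [sq_nonneg s]
      apply div_neg_of_neg_of_pos _ h2
      nlinarith
    · have t1 : Tendsto (fun s : ℝ => ((s - 1/2)^2)⁻¹) atTop (nhds 0) :=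
        aux_tendsto_inv_sq aux_tendsto_sub_half
      have t2 : Tendsto (fun s : ℝ => ((s + 1/2)^2)⁻¹) atTop (nhds 0) :=
        aux_tendsto_inv_sq (tendsto_atTop_add_const_right atTop (1/2) tendsto_id)
      have t3 := (aux_tendsto_logpart.sub tendsto_inv_atTop_zero)
      have := ((t1.div_const 24).sub (t2.div_const 24)).sub t3
      simpa using this
  have h := key t ht
  linarith

private lemma aux_ineqB (t : ℝ) (ht : 1/2 < t) :
    (t^2)⁻¹/24 - ((t + 1)^2)⁻¹/24 < log (t + 1/2) - log (t - 1/2) - t⁻¹ := by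
  have key : ∀ s : ℝ, 1/2 < s →
      0 < log (s + 1/2) - log (s - 1/2) - s⁻¹ - ((s^2)⁻¹/24 - ((s + 1)^2)⁻¹/24) := by
    apply aux_pos_of_anti
      (F' := fun s => -(24*s^3+35*s^2+15*s+1)/(48*s^3*(s+1)^3*(s^2-1/4)))
    · intro s hs
      have h1 : (0:ℝ) < s - 1/2 := by linarith
      have h2 : (0:ℝ) < s + 1/2 := by linarith
      have hs0 : (0:ℝ) < s := by linarith
      have hc : (0:ℝ) < s + 1 := by linarith
      have d3 : HasDerivAt (fun u : ℝ => log (u + 1/2)) (1/(s + 1/2)) s := by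
        simpa using ((hasDerivAt_id s).add_const (1/2)).log h2.ne'
      have d4 : HasDerivAt (fun u : ℝ => log (u - 1/2)) (1/(s - 1/2)) s := by
        simpa using ((hasDerivAt_id s).sub_const (1/2)).log h1.ne'
      have d5 : HasDerivAt (fun u : ℝ => u⁻¹) (-(s^2)⁻¹) s := hasDerivAt_inv hs0.ne'
      have d6 : HasDerivAt (fun u : ℝ => ((u)^2)⁻¹) (-(2*s) / (s^2)^2) s := by
        have : HasDerivAt (fun u : ℝ => u^2) (2*s) s := by
          simpa using (hasDerivAt_id s).fun_pow 2
        simpa using this.fun_inv (by positivity)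
      have d7 : HasDerivAt (fun u : ℝ => ((u + 1)^2)⁻¹) (-(2*(s+1)) / ((s+1)^2)^2) s := by
        have : HasDerivAt (fun u : ℝ => (u + 1)^2) (2*(s+1)) s := by
          simpa using ((hasDerivAt_id s).add_const 1).fun_pow 2
        simpa using this.fun_inv (by positivity)
      have comb := ((d3.sub d4).sub d5).sub ((d6.div_const 24).sub (d7.div_const 24))
      refine comb.congr_deriv ?_; symm; beta_reduce
      obtain ⟨a, ha⟩ : ∃ a : ℝ, a = s - 1/2 := ⟨_, rfl⟩
      obtain ⟨b, hb⟩ : ∃ b : ℝ, b = s + 1/2 := ⟨_, rfl⟩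
      obtain ⟨c, hc'⟩ : ∃ c : ℝ, c = s + 1 := ⟨_, rfl⟩
      have e1 : s^2 - 1/4 = a * b := by rw [ha, hb]; ring
      rw [e1, ← ha, ← hb, ← hc']
      have n1 : a ≠ 0 := by rw [ha]; exact h1.ne'
      have n2 : b ≠ 0 := by rw [hb]; exact h2.ne'
      have n3 : s ≠ 0 := hs0.ne'
      have n4 : c ≠ 0 := by rw [hc']; exact hc.ne'
      field_simp
      rw [ha, hb, hc']
      ring
    · intro s hs
      have h1 : (0:ℝ) < s^2 - 1/4 := by nlinarith
      have h2 : (0:ℝ) < 48*s^3*(s+1)^3*(s^2-1/4) := by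
        have h3 : (0:ℝ) < 48*s^3 := by positivity
        have h4 : (0:ℝ) < (s+1)^3 := by positivity
        nlinarith [mul_pos (mul_pos h3 h4) h1]
      apply div_neg_of_neg_of_pos _ h2
      nlinarith
    · have t1 : Tendsto (fun s : ℝ => ((s)^2)⁻¹) atTop (nhds 0) :=
        aux_tendsto_inv_sq tendsto_id
      have t2 : Tendsto (fun s : ℝ => ((s + 1)^2)⁻¹) atTop (nhds 0) :=
        aux_tendsto_inv_sq (tendsto_atTop_add_const_right atTop 1 tendsto_id)
      have t3 := (aux_tendsto_logpart.sub tendsto_inv_atTop_zero)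
      have := t3.sub ((t1.div_const 24).sub (t2.div_const 24))
      simpa using this
  have h := key t ht
  linarith

private lemma aux_diffAt {y : ℝ} (hy : 0 < y) :
    DifferentiableAt ℝ (Real.log ∘ Real.Gamma) y := by
  refine (Real.differentiableAt_Gamma ?_).log (Real.Gamma_ne_zero ?_) <;>
    exact fun m => ne_of_gt (lt_of_le_of_lt (neg_nonpos.mpr (Nat.cast_nonneg m)) hy)

private lemma aux_rec {y : ℝ} (hy : 0 < y) :
    (Real.log ∘ Real.Gamma) (y + 1) = (Real.log ∘ Real.Gamma) y + log y := by
  simp only [Function.comp_apply, Real.Gamma_add_one hy.ne',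
    Real.log_mul hy.ne' (Real.Gamma_pos_of_pos hy).ne', add_comm]

private lemma aux_deriv_rec {y : ℝ} (hy : 0 < y) :
    deriv (Real.log ∘ Real.Gamma) (y + 1) = deriv (Real.log ∘ Real.Gamma) y + 1/y := by
  rw [← deriv_comp_add_const, one_div, ← Real.deriv_log,
    ← deriv_add (aux_diffAt hy) (Real.differentiableAt_log hy.ne')]
  apply Filter.EventuallyEq.deriv_eq
  filter_upwards [eventually_gt_nhds hy] with z hz
  exact aux_rec hz

private lemma aux_deriv_le {y : ℝ} (hy : 0 < y) :
    deriv (Real.log ∘ Real.Gamma) y ≤ log y := by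
  have h := Real.convexOn_log_Gamma.deriv_le_slope (Set.mem_Ioi.mpr hy)
    (Set.mem_Ioi.mpr (by linarith : (0:ℝ) < y + 1)) (lt_add_one y) (aux_diffAt hy)
  rwa [slope_def_field, aux_rec hy, add_sub_cancel_left, add_sub_cancel_left, div_one] at h

private lemma aux_le_deriv {y : ℝ} (hy : 0 < y) :
    log y ≤ deriv (Real.log ∘ Real.Gamma) (y + 1) := by
  have h := Real.convexOn_log_Gamma.slope_le_deriv (Set.mem_Ioi.mpr hy)
    (Set.mem_Ioi.mpr (by linarith : (0:ℝ) < y + 1)) (lt_add_one y) (aux_diffAt (by linarith))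
  rwa [slope_def_field, aux_rec hy, add_sub_cancel_left, add_sub_cancel_left, div_one] at h

private noncomputable def auxP (x : ℝ) (N : ℕ) : ℝ := ∑ n ∈ Finset.range N, (x + 1 + n)⁻¹

private noncomputable def auxL (x : ℝ) (N : ℕ) : ℝ :=
  log (x + N + 1/2) - log (x + 1/2) - auxP x N

private lemma aux_psi_sum (x : ℝ) (hx : -(1/2:ℝ) < x) (N : ℕ) :
    deriv (Real.log ∘ Real.Gamma) (x + 1 + N) =
      deriv (Real.log ∘ Real.Gamma) (x + 1) + auxP x N := by
  induction N with
  | zero => simp [auxP]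
  | succ N ih =>
    have hN : (0:ℝ) ≤ N := Nat.cast_nonneg N
    have hpos : (0:ℝ) < x + 1 + N := by linarith
    have e : x + 1 + ((N:ℝ) + 1) = (x + 1 + N) + 1 := by ring
    rw [Nat.cast_add, Nat.cast_one, e, aux_deriv_rec hpos, ih]
    simp only [auxP, Finset.sum_range_succ]
    rw [one_div]
    ring

private lemma aux_psi_limit (x : ℝ) (hx : -(1/2:ℝ) < x) :
    Tendsto (fun N : ℕ => log (x + N) - auxP x N) atTop
      (nhds (deriv (Real.log ∘ Real.Gamma) (x + 1))) := by
  set ψ := deriv (Real.log ∘ Real.Gamma) (x + 1) with hψ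
  have hlogd : Tendsto (fun N : ℕ => log (x + 1 + N) - log (x + N)) atTop (nhds 0) := by
    have h := (aux_tendsto_log_diff (x+1) x).comp tendsto_natCast_atTop_atTop
    apply h.congr
    intro N
    simp only [Function.comp_apply]
    rw [show (N:ℝ) + (x+1) = x + 1 + N by ring, show (N:ℝ) + x = x + N by ring]
  have hlow : Tendsto (fun N : ℕ => ψ - (log (x + 1 + N) - log (x + N))) atTop (nhds ψ) := by
    simpa using (tendsto_const_nhds (x := ψ) (f := atTop)).sub hlogd
  refine tendsto_of_tendsto_of_tendsto_of_le_of_le' hlow tendsto_const_nhds ?_ ?_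
  · filter_upwards with N
    have hN : (0:ℝ) ≤ N := Nat.cast_nonneg N
    have hpos : (0:ℝ) < x + 1 + N := by linarith
    have h2 := aux_deriv_le hpos
    rw [aux_psi_sum x hx N, ← hψ] at h2
    linarith
  · filter_upwards [eventually_ge_atTop 1] with N hN
    have hN' : (1:ℝ) ≤ N := by exact_mod_cast hN
    have hpos : (0:ℝ) < x + N := by linarith
    have h1 := aux_le_deriv hpos
    rw [show x + N + 1 = x + 1 + N by ring, aux_psi_sum x hx N, ← hψ] at h1
    linarith

private lemma aux_L_tendsto (x : ℝ) (hx : -(1/2:ℝ) < x) :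
    Tendsto (auxL x) atTop
      (nhds (deriv (Real.log ∘ Real.Gamma) (x + 1) - log (x + 1/2))) := by
  have hlogd : Tendsto (fun N : ℕ => log (x + N + 1/2) - log (x + N)) atTop (nhds 0) := by
    have h := (aux_tendsto_log_diff (x + 1/2) x).comp tendsto_natCast_atTop_atTop
    apply h.congr
    intro N
    simp only [Function.comp_apply]
    rw [show (N:ℝ) + (x+1/2) = x + N + 1/2 by ring, show (N:ℝ) + x = x + N by ring]
  have := (hlogd.add (aux_psi_limit x hx)).sub_const (log (x + 1/2))
  rw [zero_add] at this
  apply this.congr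
  intro N
  simp only [auxL]
  ring

private lemma aux_L_succ (x : ℝ) (N : ℕ) :
    auxL x (N + 1) = auxL x N +
      (log (x + N + 3/2) - log (x + N + 1/2) - (x + 1 + N)⁻¹) := by
  simp only [auxL, auxP, Finset.sum_range_succ, Nat.cast_add, Nat.cast_one]
  rw [show x + ((N:ℝ) + 1) + 1/2 = x + N + 3/2 by ring]
  ring

private lemma aux_low (x : ℝ) (hx : -(1/2:ℝ) < x) (N : ℕ) :
    ((x+2)^2)⁻¹/24 - ((x+N+2)^2)⁻¹/24 ≤ auxL x (N+1) - auxL x 1 := by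
  induction N with
  | zero => norm_num
  | succ N ih =>
    have hN : (0:ℝ) ≤ N := Nat.cast_nonneg N
    have hstep := aux_L_succ x (N+1)
    push_cast at hstep ⊢
    rw [show x + ((N:ℝ)+1) + 3/2 = x + N + 5/2 by ring,
      show x + ((N:ℝ)+1) + 1/2 = x + N + 3/2 by ring,
      show x + 1 + ((N:ℝ)+1) = x + N + 2 by ring] at hstep
    rw [show x + ((N:ℝ)+1) + 2 = x + N + 3 by ring]
    have hB := aux_ineqB (x + N + 2) (by linarith)
    rw [show x + (N:ℝ) + 2 + 1/2 = x + N + 5/2 by ring,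
      show x + (N:ℝ) + 2 - 1/2 = x + N + 3/2 by ring,
      show x + (N:ℝ) + 2 + 1 = x + N + 3 by ring] at hB
    linarith

private lemma aux_up (x : ℝ) (hx : -(1/2:ℝ) < x) (N : ℕ) :
    auxL x (N+1) - auxL x 1 ≤ ((x+3/2)^2)⁻¹/24 - ((x+N+3/2)^2)⁻¹/24 := by
  induction N with
  | zero => norm_num
  | succ N ih =>
    have hN : (0:ℝ) ≤ N := Nat.cast_nonneg N
    have hstep := aux_L_succ x (N+1)
    push_cast at hstep ⊢
    rw [show x + ((N:ℝ)+1) + 3/2 = x + N + 5/2 by ring,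
      show x + ((N:ℝ)+1) + 1/2 = x + N + 3/2 by ring,
      show x + 1 + ((N:ℝ)+1) = x + N + 2 by ring] at hstep
    rw [show x + ((N:ℝ)+1) + 3/2 = x + N + 5/2 by ring]
    have hA := aux_ineqA (x + N + 2) (by linarith)
    rw [show x + (N:ℝ) + 2 + 1/2 = x + N + 5/2 by ring,
      show x + (N:ℝ) + 2 - 1/2 = x + N + 3/2 by ring] at hA
    linarith

theorem stmt_0' (x : ℝ) (hx : -(1/2 : ℝ) < x) :
    1 / (24 * (x + 1)^2) <
      deriv (Real.log ∘ Real.Gamma) (x+1) - Real.log (x + 1/2) ∧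
    deriv (Real.log ∘ Real.Gamma) (x+1) - Real.log (x + 1/2) <
      1 / (24 * (x + 1/2)^2) := by
  set T := deriv (Real.log ∘ Real.Gamma) (x+1) - Real.log (x + 1/2) with hTdef
  have htend : Tendsto (fun N : ℕ => auxL x (N+1) - auxL x 1) atTop
      (nhds (T - auxL x 1)) := by
    have h := ((aux_L_tendsto x hx).comp (tendsto_add_atTop_nat 1)).sub_const (auxL x 1)
    rw [← hTdef] at h
    exact h
  have hinv2 : Tendsto (fun N : ℕ => ((x+N+2)^2)⁻¹) atTop (nhds 0) := by
    have h := (aux_tendsto_inv_sq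
      (tendsto_atTop_add_const_right atTop (x+2) tendsto_id)).comp tendsto_natCast_atTop_atTop
    apply h.congr
    intro N
    simp only [Function.comp_apply, id_eq]
    rw [show (N:ℝ) + (x+2) = x + N + 2 by ring]
  have hinv32 : Tendsto (fun N : ℕ => ((x+N+3/2)^2)⁻¹) atTop (nhds 0) := by
    have h := (aux_tendsto_inv_sq
      (tendsto_atTop_add_const_right atTop (x+3/2) tendsto_id)).comp tendsto_natCast_atTop_atTop
    apply h.congr
    intro N
    simp only [Function.comp_apply, id_eq]
    rw [show (N:ℝ) + (x+3/2) = x + N + 3/2 by ring]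
  have hle1 : ((x+2)^2)⁻¹/24 ≤ T - auxL x 1 := by
    have hlim : Tendsto (fun N : ℕ => ((x+2)^2)⁻¹/24 - ((x+N+2)^2)⁻¹/24) atTop
        (nhds (((x+2)^2)⁻¹/24)) := by
      simpa using (tendsto_const_nhds (x := ((x+2)^2)⁻¹/24) (f := atTop (α := ℕ))).sub
        (hinv2.div_const 24)
    exact le_of_tendsto_of_tendsto' hlim htend (aux_low x hx)
  have hle2 : T - auxL x 1 ≤ ((x+3/2)^2)⁻¹/24 := by
    have hlim : Tendsto (fun N : ℕ => ((x+3/2)^2)⁻¹/24 - ((x+N+3/2)^2)⁻¹/24) atTop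
        (nhds (((x+3/2)^2)⁻¹/24)) := by
      simpa using (tendsto_const_nhds (x := ((x+3/2)^2)⁻¹/24) (f := atTop (α := ℕ))).sub
        (hinv32.div_const 24)
    exact le_of_tendsto_of_tendsto' htend hlim (aux_up x hx)
  have hL1 : auxL x 1 = log (x + 3/2) - log (x + 1/2) - (x+1)⁻¹ := by
    simp only [auxL, auxP, Finset.sum_range_one, Nat.cast_one, Nat.cast_zero]
    rw [show x + (1:ℝ) + 1/2 = x + 3/2 by ring, show x + 1 + (0:ℝ) = x + 1 by ring]
  have hBx := aux_ineqB (x+1) (by linarith)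
  rw [show x + (1:ℝ) + 1/2 = x + 3/2 by ring, show x + (1:ℝ) - 1/2 = x + 1/2 by ring,
    show x + (1:ℝ) + 1 = x + 2 by ring] at hBx
  have hAx := aux_ineqA (x+1) (by linarith)
  rw [show x + (1:ℝ) + 1/2 = x + 3/2 by ring, show x + (1:ℝ) - 1/2 = x + 1/2 by ring] at hAx
  have e1 : 1 / (24 * (x + 1)^2) = ((x+1)^2)⁻¹/24 := by rw [one_div, mul_inv]; ring
  have e2 : 1 / (24 * (x + 1/2)^2) = ((x+1/2)^2)⁻¹/24 := by rw [one_div, mul_inv]; ring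
  constructor
  · rw [e1]; linarith
  · rw [e2]; linarith

end auxiliary

theorem stmt_0 (x : ℝ) (hx : -(1/2 : ℝ) < x) :
    1 / (24 * (x + 1)^2) <
      Hreal x - Real.eulerMascheroniConstant - Real.log (x + 1/2) ∧
    Hreal x - Real.eulerMascheroniConstant - Real.log (x + 1/2) <
      1 / (24 * (x + 1/2)^2) := by
  have hd : Hreal x - Real.eulerMascheroniConstant = deriv (Real.log ∘ Real.Gamma) (x+1) := by
    simp only [Hreal, add_sub_cancel_right]
    rfl
  rw [hd]
  exact stmt_0' x hx
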